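/- Let h_1(x) = −3x_{12} + 4x_{13} − x_{23} − x_{14} + 3x_{24} − 2x_{34} and h_2(x) = 4x_{12} − 6x_{13} + 3x_{23} + 2x_{14} − 5x_{24} + 2x_{34}. Then (a) every x ∈ ℝ^6 with x_{12} = x_{34} = 0, h_1(x) = 0, h_2(x) = 0 and qq(x) = 0 satisfies 2x_{14}^2 − x_{14}x_{24} − 4x_{24}^2 = 0; and (b) the set of all such x is the union of exactly two distinct lines through the origin in ℝ^6 (i.e. two distinct real points of P^5). -/
import Mathlib


/-- Coordinates of `ℝ^6` are ordered as `(x₁₂, x₁₃, x₂₃, x₁₄, x₂₄, x₃₄)`, indices `0,…,5`.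
`h₁(x) = −3x₁₂ + 4x₁₃ − x₂₃ − x₁₄ + 3x₂₄ − 2x₃₄`. -/
def h112 (x : Fin 6 → ℝ) : ℝ := -3 * x 0 + 4 * x 1 - x 2 - x 3 + 3 * x 4 - 2 * x 5

/-- `h₂(x) = 4x₁₂ − 6x₁₃ + 3x₂₃ + 2x₁₄ − 5x₂₄ + 2x₃₄`. -/
def h212 (x : Fin 6 → ℝ) : ℝ := 4 * x 0 - 6 * x 1 + 3 * x 2 + 2 * x 3 - 5 * x 4 + 2 * x 5

/-- The Plücker quadric `qq(x) = x₁₂x₃₄ − x₁₃x₂₄ + x₁₄x₂₃`. -/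
def qq12 (x : Fin 6 → ℝ) : ℝ := x 0 * x 5 - x 1 * x 4 + x 3 * x 2

/-- extensionality for `Fin 6 → ℝ` -/
lemma fin6_ext {f g : Fin 6 → ℝ} (h0 : f 0 = g 0) (h1 : f 1 = g 1) (h2 : f 2 = g 2)
    (h3 : f 3 = g 3) (h4 : f 4 = g 4) (h5 : f 5 = g 5) : f = g := by
  funext i
  fin_cases i <;> assumption

theorem stmt12 :
    (∀ x : Fin 6 → ℝ, x 0 = 0 → x 5 = 0 → h112 x = 0 → h212 x = 0 → qq12 x = 0 →
      2 * x 3 ^ 2 - x 3 * x 4 - 4 * x 4 ^ 2 = 0) ∧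
    (∃ u v : Fin 6 → ℝ, u ≠ 0 ∧ v ≠ 0 ∧ (¬ ∃ t : ℝ, v = t • u) ∧
      {x : Fin 6 → ℝ | x 0 = 0 ∧ x 5 = 0 ∧ h112 x = 0 ∧ h212 x = 0 ∧ qq12 x = 0} =
        {x | ∃ t : ℝ, x = t • u} ∪ {x | ∃ t : ℝ, x = t • v}) := by
  set s : ℝ := Real.sqrt 33 with hsdef
  have hs : s ^ 2 = 33 := Real.sq_sqrt (by norm_num)
  have hspos : 0 < s := Real.sqrt_pos.mpr (by norm_num)
  have key : ∀ x : Fin 6 → ℝ, x 0 = 0 → x 5 = 0 → h112 x = 0 → h212 x = 0 → qq12 x = 0 →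
      2 * x 3 ^ 2 - x 3 * x 4 - 4 * x 4 ^ 2 = 0 := by
    intro x e0 e5 h1 h2 hq
    simp only [h112, h212, qq12] at h1 h2 hq
    rw [e0, e5] at h1 h2 hq
    linear_combination (-6 : ℝ) * hq + (6 * x 3 - 3 * x 4) * h1 + (4 * x 3 - x 4) * h2
  set u : Fin 6 → ℝ := ![0, s - 15, 6 - 2 * s, 6 + 6 * s, 24, 0] with hudef
  set v : Fin 6 → ℝ := ![0, -s - 15, 6 + 2 * s, 6 - 6 * s, 24, 0] with hvdef
  have hu0 : u 0 = 0 := rfl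
  have hu1 : u 1 = s - 15 := rfl
  have hu2 : u 2 = 6 - 2 * s := rfl
  have hu3 : u 3 = 6 + 6 * s := rfl
  have hu4 : u 4 = 24 := rfl
  have hu5 : u 5 = 0 := rfl
  have hv0 : v 0 = 0 := rfl
  have hv1 : v 1 = -s - 15 := rfl
  have hv2 : v 2 = 6 + 2 * s := rfl
  have hv3 : v 3 = 6 - 6 * s := rfl
  have hv4 : v 4 = 24 := rfl
  have hv5 : v 5 = 0 := rfl
  refine ⟨key, u, v, ?_, ?_, ?_, ?_⟩
  · intro h
    have h4 := congrFun h 4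
    rw [hu4] at h4
    simp at h4
  · intro h
    have h4 := congrFun h 4
    rw [hv4] at h4
    simp at h4
  · rintro ⟨t, ht⟩
    have h4 := congrFun ht 4
    have h3 := congrFun ht 3
    rw [Pi.smul_apply, smul_eq_mul] at h4 h3
    rw [hv4, hu4] at h4
    rw [hv3, hu3] at h3
    have ht1 : t = 1 := by linarith
    rw [ht1, one_mul] at h3
    nlinarith [hspos]
  · ext x
    simp only [Set.mem_setOf_eq, Set.mem_union]
    constructor
    · rintro ⟨e0, e5, h1, h2, hq⟩
      have hquad := key x e0 e5 h1 h2 hq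
      simp only [h112, h212, qq12] at h1 h2 hq
      rw [e0, e5] at h1 h2 hq
      have h6x1 : 6 * x 1 = x 3 - 4 * x 4 := by linarith
      have h3x2 : 3 * x 2 = x 4 - x 3 := by linarith
      have hfact : (4 * x 3 - (1 + s) * x 4) * (4 * x 3 - (1 - s) * x 4) = 0 := by
        linear_combination 8 * hquad - x 4 ^ 2 * hs
      rcases mul_eq_zero.mp hfact with hc | hc
      · left
        refine ⟨x 4 / 24, fin6_ext ?_ ?_ ?_ ?_ ?_ ?_⟩ <;>
          rw [Pi.smul_apply, smul_eq_mul]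
        · rw [hu0]; linarith
        · rw [hu1]; linear_combination (4 * h6x1 + hc) / 24
        · rw [hu2]; linear_combination (4 * h3x2 - hc) / 12
        · rw [hu3]; linear_combination hc / 4
        · rw [hu4]; ring
        · rw [hu5]; linarith
      · right
        refine ⟨x 4 / 24, fin6_ext ?_ ?_ ?_ ?_ ?_ ?_⟩ <;>
          rw [Pi.smul_apply, smul_eq_mul]
        · rw [hv0]; linarith
        · rw [hv1]; linear_combination (4 * h6x1 + hc) / 24
        · rw [hv2]; linear_combination (4 * h3x2 - hc) / 12
        · rw [hv3]; linear_combination hc / 4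
        · rw [hv4]; ring
        · rw [hv5]; linarith
    · rintro (⟨t, rfl⟩ | ⟨t, rfl⟩)
      · refine ⟨?_, ?_, ?_, ?_, ?_⟩ <;>
          simp only [h112, h212, qq12, Pi.smul_apply, smul_eq_mul, hu0, hu1, hu2, hu3, hu4, hu5]
        · ring
        · ring
        · ring
        · ring
        · linear_combination (-12 * t ^ 2) * hs
      · refine ⟨?_, ?_, ?_, ?_, ?_⟩ <;>
          simp only [h112, h212, qq12, Pi.smul_apply, smul_eq_mul, hv0, hv1, hv2, hv3, hv4, hv5]
        · ring
        · ring
        · ring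
        · ring
        · linear_combination (-12 * t ^ 2) * hs
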